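/- Let A = B ⊗ C be a tensor product of unital associative k-algebras, M a B-bimodule and N a C-bimodule, with the induced A-bimodule structure on M ⊗ N. For Hochschild cochains f ∈ C^q(B,M) and g ∈ C^p(C,N), the cup product (f ⊔ g)(b₁⊗c₁,…,b_{q+p}⊗c_{q+p}) = ± f(b₁,…,b_q)·b_{q+1}⋯b_{q+p} ⊗ c₁⋯c_q·g(c_{q+1},…,c_{q+p}) (defined on elementary tensors, with the Koszul sign in the ungraded case being (−1)^0 = 1) satisfies the Leibniz rule ∂(f ⊔ g) = ∂f ⊔ g + (−1)^q f ⊔ ∂g, and hence induces a product HH^q(B,M) ⊗ HH^p(C,N) → HH^{q+p}(B⊗C, M⊗N). -/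

import Mathlib

/- STATEMENT 17: For algebras B, C over a field k, a B-bimodule M and a
C-bimodule N (bimodules encoded by compatible left actions of B, Bᵐᵒᵖ, etc.),
the cup product of Hochschild cochains,
  (f ⊔ g)(b₁⊗c₁,…,b_{q+p}⊗c_{q+p})
    = f(b₁,…,b_q)·b_{q+1}⋯b_{q+p} ⊗ c₁⋯c_q·g(c_{q+1},…,c_{q+p}),
satisfies the Leibniz rule ∂(f ⊔ g) = ∂f ⊔ g + (−1)^q f ⊔ ∂g, hence induces a
product HH^q(B,M) ⊗ HH^p(C,N) → HH^{q+p}(B⊗C, M⊗N).  Since multilinear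
cochains on B ⊗ C with values in M ⊗ N are determined by their values on
elementary tensors, and products and bimodule actions of elementary tensors on
elementary tensors stay elementary, the Leibniz identity is faithfully
expressed entirely on elementary-tensor arguments (i.e. on pairs of tuples
(b, c)); the Hochschild differential of the algebra B ⊗ C, restricted to
elementary tensors, appears below as `hochDT`. -/

open scoped BigOperators TensorProduct

variable {k B C M N : Type*} [Field k]
  [Ring B] [Algebra k B] [Ring C] [Algebra k C]
  [AddCommGroup M] [Module k M] [Module B M] [Module Bᵐᵒᵖ M]
  [SMulCommClass B k M] [SMulCommClass Bᵐᵒᵖ k M] [SMulCommClass B Bᵐᵒᵖ M]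
  [AddCommGroup N] [Module k N] [Module C N] [Module Cᵐᵒᵖ N]
  [SMulCommClass C k N] [SMulCommClass Cᵐᵒᵖ k N] [SMulCommClass C Cᵐᵒᵖ N]

/-- the `j`-th "merge" of a tuple. -/
def contractArg {D : Type*} [Mul D] (p : ℕ) (a : Fin (p + 1) → D) (j : Fin p) :
    Fin p → D :=
  fun i => if i = j then a i.castSucc * a i.succ
    else if (i : ℕ) < (j : ℕ) then a i.castSucc else a i.succ

variable (k) in
/-- scalar multiplication by `r` as a `k`-linear endomorphism. -/
def lmulG {R V : Type*} [Monoid R] [AddCommMonoid V] [Module k V]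
    [DistribMulAction R V] [SMulCommClass R k V] (r : R) : V →ₗ[k] V where
  toFun v := r • v
  map_add' := smul_add r
  map_smul' c v := smul_comm r c v

/-- the Hochschild coboundary for an algebra `D` with bimodule `V`. -/
def hochD {D V : Type*} [Ring D] [AddCommGroup V] [Module D V] [Module Dᵐᵒᵖ V]
    (q : ℕ) (f : (Fin q → D) → V) : (Fin (q + 1) → D) → V := fun a =>
  a 0 • f (Fin.tail a)
    + ∑ j : Fin q, (-1 : ℤ) ^ ((j : ℕ) + 1) • f (contractArg q a j)
    + (-1 : ℤ) ^ (q + 1) • (MulOpposite.op (a (Fin.last q)) • f (Fin.init a))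

/-- the cup product `f ⊔ g` evaluated on a tuple of elementary tensors
`(bᵢ ⊗ cᵢ)`; `r = q + p` is the total arity. -/
noncomputable def cupFun (q p r : ℕ) (hr : r = q + p)
    (f : (Fin q → B) → M) (g : (Fin p → C) → N)
    (b : Fin r → B) (c : Fin r → C) : M ⊗[k] N :=
  (MulOpposite.op
      ((List.ofFn fun i : Fin p =>
        b ⟨q + (i : ℕ), by have := i.isLt; omega⟩).prod)
    • f fun i : Fin q => b ⟨(i : ℕ), by have := i.isLt; omega⟩)
  ⊗ₜ[k]
  (((List.ofFn fun i : Fin q =>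
        c ⟨(i : ℕ), by have := i.isLt; omega⟩).prod)
    • g fun i : Fin p => c ⟨q + (i : ℕ), by have := i.isLt; omega⟩)

/-- the Hochschild coboundary for `(B ⊗ C, M ⊗ N)`, restricted to
elementary-tensor arguments. -/
noncomputable def hochDT (r : ℕ)
    (h : (Fin r → B) → (Fin r → C) → M ⊗[k] N) :
    (Fin (r + 1) → B) → (Fin (r + 1) → C) → M ⊗[k] N := fun b c =>
  TensorProduct.map (lmulG k (b 0)) (lmulG k (c 0))
      (h (Fin.tail b) (Fin.tail c))
    + ∑ j : Fin r, (-1 : ℤ) ^ ((j : ℕ) + 1) •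
        h (contractArg r b j) (contractArg r c j)
    + (-1 : ℤ) ^ (r + 1) •
        TensorProduct.map (lmulG k (MulOpposite.op (b (Fin.last r))))
          (lmulG k (MulOpposite.op (c (Fin.last r))))
          (h (Fin.init b) (Fin.init c))

set_option linter.unreachableTactic false
set_option linter.unusedTactic false
set_option linter.unnecessarySeqFocus false

lemma fin_app {n : ℕ} {D : Sort*} (a : Fin n → D) {x y : Fin n}
    (h : (x : ℕ) = (y : ℕ)) : a x = a y := by
  congr 1; exact Fin.ext h

lemma ofFn_prod_cons {D : Type*} [Monoid D] (m : ℕ) (a : Fin (m + 1) → D) :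
    (List.ofFn a).prod = a 0 * (List.ofFn fun i : Fin m => a i.succ).prod := by
  rw [List.ofFn_succ, List.prod_cons]

lemma ofFn_prod_concat {D : Type*} [Monoid D] (m : ℕ) (a : Fin (m + 1) → D) :
    (List.ofFn a).prod
      = (List.ofFn fun i : Fin m => a i.castSucc).prod * a (Fin.last m) := by
  rw [List.ofFn_succ', List.concat_eq_append, List.prod_append, List.prod_cons,
    List.prod_nil, mul_one]

lemma contractArg_zero_apply {D : Type*} [Mul D] (n : ℕ) (a : Fin (n + 2) → D)
    (i : Fin (n + 1)) :
    contractArg (n + 1) a 0 i = if i = 0 then a 0 * a 1 else a i.succ := by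
  unfold contractArg
  rcases eq_or_ne i 0 with h | h
  · subst h; simp
  · simp [h, (Fin.pos_iff_ne_zero.mpr h : (0 : Fin (n + 1)) < i).not_gt]

lemma contractArg_succ_succ {D : Type*} [Mul D] (n : ℕ) (a : Fin (n + 2) → D)
    (j : Fin n) (i : Fin n) :
    contractArg (n + 1) a j.succ i.succ = contractArg n (Fin.tail a) j i := by
  unfold contractArg
  rcases eq_or_ne i j with h | h
  · subst h
    simp [Fin.tail, Fin.succ_castSucc, -Fin.castSucc_succ]
  · have : i.succ ≠ j.succ := fun hc => h (Fin.succ_injective _ hc)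
    rcases lt_or_ge (i : ℕ) (j : ℕ) with h2 | h2
    · simp [this, h, h2, Fin.tail, Fin.succ_castSucc, -Fin.castSucc_succ]
    · simp [this, h, h2.not_gt, Fin.tail,
        (by omega : ¬ ((i : ℕ) + 1 < (j : ℕ) + 1))]

lemma contractArg_succ_zero {D : Type*} [Mul D] (n : ℕ) (a : Fin (n + 2) → D)
    (j : Fin n) :
    contractArg (n + 1) a j.succ 0 = a 0 := by
  unfold contractArg
  have h1 : (0 : Fin (n + 1)) ≠ j.succ := (Fin.succ_ne_zero j).symm
  have h2 : ((0 : Fin (n+1)) : ℕ) < ((j.succ : Fin (n+1)) : ℕ) := by simp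
  simp [h1, h2]

lemma prod_contractArg {D : Type*} [Monoid D] :
    ∀ (m : ℕ) (a : Fin (m + 1) → D) (j : Fin m),
      (List.ofFn (contractArg m a j)).prod = (List.ofFn a).prod := by
  intro m
  induction m with
  | zero => exact fun a j => j.elim0
  | succ n ih =>
    intro a j
    induction j using Fin.cases with
    | zero =>
      rw [ofFn_prod_cons n (contractArg (n+1) a 0), ofFn_prod_cons (n+1) a,
        ofFn_prod_cons n (fun i : Fin (n+1) => a i.succ), ← mul_assoc]
      have h1 : contractArg (n + 1) a 0 0 = a 0 * a (Fin.succ 0) := by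
        rw [contractArg_zero_apply, if_pos rfl]
        exact congrArg (a 0 * ·) (fin_app a (by simp))
      have h2 : (List.ofFn fun i : Fin n => contractArg (n + 1) a 0 i.succ)
          = List.ofFn fun i : Fin n => a i.succ.succ :=
        congrArg List.ofFn (funext fun i => by
          rw [contractArg_zero_apply, if_neg (Fin.succ_ne_zero i)])
      rw [h1, h2]
    | succ j' =>
      rw [ofFn_prod_cons, ofFn_prod_cons (n+1) a, contractArg_succ_zero]
      congr 1
      rw [show (List.ofFn fun i : Fin n => contractArg (n+1) a j'.succ i.succ)
          = List.ofFn (contractArg n (Fin.tail a) j') from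
          congrArg List.ofFn (funext fun i => contractArg_succ_succ n a j' i),
        ih (Fin.tail a) j']
      rfl

lemma contractArg_left_lo {D : Type*} [Mul D] {q n : ℕ} (a : Fin (q + n + 1) → D)
    (j : Fin (q + n)) (hj : (j : ℕ) < q) (i : Fin q) (h : (i : ℕ) < q + n) :
    contractArg (q + n) a j ⟨(i : ℕ), h⟩
      = contractArg q (fun t : Fin (q + 1) => a ⟨(t : ℕ), by omega⟩)
          ⟨(j : ℕ), hj⟩ i := by
  simp only [contractArg, Fin.ext_iff]
  split_ifs <;>
    first
      | exact congrArg₂ (· * ·)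
          (fin_app a (by (try simp only [Fin.coe_castSucc, Fin.val_succ, Fin.castSucc_mk, Fin.succ_mk]) <;> omega))
          (fin_app a (by (try simp only [Fin.coe_castSucc, Fin.val_succ, Fin.castSucc_mk, Fin.succ_mk]) <;> omega))
      | exact fin_app a (by (try simp only [Fin.coe_castSucc, Fin.val_succ, Fin.castSucc_mk, Fin.succ_mk]) <;> omega)
      | (exfalso; omega)

lemma contractArg_left_hi {D : Type*} [Mul D] {q n : ℕ} (a : Fin (q + n + 1) → D)
    (j : Fin (q + n)) (hj : (j : ℕ) < q) (i : Fin n) (h : q + (i : ℕ) < q + n)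
    (h' : q + (i : ℕ) + 1 < q + n + 1) :
    contractArg (q + n) a j ⟨q + (i : ℕ), h⟩ = a ⟨q + (i : ℕ) + 1, h'⟩ := by
  simp only [contractArg, Fin.ext_iff]
  split_ifs <;>
    first
      | exact fin_app a (by (try simp only [Fin.coe_castSucc, Fin.val_succ, Fin.castSucc_mk, Fin.succ_mk]) <;> omega)
      | (exfalso; omega)

lemma contractArg_right_lo {D : Type*} [Mul D] {q n : ℕ} (a : Fin (q + n + 1) → D)
    (j : Fin (q + n)) (hj : q ≤ (j : ℕ)) (i : Fin q) (h : (i : ℕ) < q + n)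
    (h' : (i : ℕ) < q + n + 1) :
    contractArg (q + n) a j ⟨(i : ℕ), h⟩ = a ⟨(i : ℕ), h'⟩ := by
  simp only [contractArg, Fin.ext_iff]
  split_ifs <;>
    first
      | exact fin_app a (by (try simp only [Fin.coe_castSucc, Fin.val_succ, Fin.castSucc_mk, Fin.succ_mk]) <;> omega)
      | (exfalso; omega)

lemma contractArg_right_hi {D : Type*} [Mul D] {q n : ℕ} (a : Fin (q + n + 1) → D)
    (j : Fin (q + n)) (hj : q ≤ (j : ℕ)) (i : Fin n) (h : q + (i : ℕ) < q + n) :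
    contractArg (q + n) a j ⟨q + (i : ℕ), h⟩
      = contractArg n (fun t : Fin (n + 1) => a ⟨q + (t : ℕ), by omega⟩)
          ⟨(j : ℕ) - q, by omega⟩ i := by
  simp only [contractArg, Fin.ext_iff]
  split_ifs <;>
    first
      | exact congrArg₂ (· * ·)
          (fin_app a (by (try simp only [Fin.coe_castSucc, Fin.val_succ, Fin.castSucc_mk, Fin.succ_mk]) <;> omega))
          (fin_app a (by (try simp only [Fin.coe_castSucc, Fin.val_succ, Fin.castSucc_mk, Fin.succ_mk]) <;> omega))
      | exact fin_app a (by (try simp only [Fin.coe_castSucc, Fin.val_succ, Fin.castSucc_mk, Fin.succ_mk]) <;> omega)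
      | (exfalso; omega)

lemma lmulG_apply {R V : Type*} [Monoid R] [AddCommMonoid V] [Module k V]
    [DistribMulAction R V] [SMulCommClass R k V] (r : R) (v : V) :
    lmulG k r v = r • v := rfl

lemma zsmul_tmul {V W : Type*} [AddCommGroup V] [Module k V] [AddCommGroup W]
    [Module k W] (z : ℤ) (x : V) (y : W) :
    (z • x) ⊗ₜ[k] y = z • (x ⊗ₜ y) := TensorProduct.smul_tmul' z x y

lemma tmul_zsmul {V W : Type*} [AddCommGroup V] [Module k V] [AddCommGroup W]
    [Module k W] (z : ℤ) (x : V) (y : W) :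
    x ⊗ₜ[k] (z • y) = z • (x ⊗ₜ y) := TensorProduct.tmul_smul z x y

lemma op_zsmulM (r : Bᵐᵒᵖ) (z : ℤ) (x : M) : r • z • x = z • r • x :=
  smul_comm r z x

lemma c_zsmulN (r : C) (z : ℤ) (y : N) : r • z • y = z • r • y :=
  smul_comm r z y

lemma zpow_comb3 {V : Type*} [AddCommGroup V] (a e : ℕ) (v : V) :
    (-1 : ℤ) ^ a • ((-1 : ℤ) ^ (e + 1) • v) = (-1 : ℤ) ^ (a + e + 1) • v := by
  rw [smul_smul, ← pow_add, ← Nat.add_assoc]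

set_option maxHeartbeats 1000000 in
/-- the Leibniz rule `∂(f ⊔ g) = ∂f ⊔ g + (−1)^q f ⊔ ∂g`. -/
theorem cup_product_leibniz (q p : ℕ)
    (f : MultilinearMap k (fun _ : Fin q => B) M)
    (g : MultilinearMap k (fun _ : Fin p => C) N)
    (b : Fin (q + p + 1) → B) (c : Fin (q + p + 1) → C) :
    hochDT (q + p) (cupFun (k := k) q p (q + p) rfl ⇑f ⇑g) b c
      = cupFun (k := k) (q + 1) p (q + p + 1) (by omega) (hochD q ⇑f) ⇑g b c
        + (-1 : ℤ) ^ q •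
            cupFun (k := k) q (p + 1) (q + p + 1) (by omega) ⇑f (hochD p ⇑g) b c := by
  haveI : SMulCommClass Bᵐᵒᵖ B M := SMulCommClass.symm B Bᵐᵒᵖ M
  haveI : SMulCommClass Cᵐᵒᵖ C N := SMulCommClass.symm C Cᵐᵒᵖ N
  have h1 : (b 0 • MulOpposite.op ((List.ofFn fun i : Fin p => Fin.tail b ⟨q + (i : ℕ), by omega⟩).prod)
        • (f fun i : Fin q => Fin.tail b ⟨(i : ℕ), by omega⟩)) ⊗ₜ[k]
      (c 0 • ((List.ofFn fun i : Fin q => Fin.tail c ⟨(i : ℕ), by omega⟩).prod)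
        • (g fun i : Fin p => Fin.tail c ⟨q + (i : ℕ), by omega⟩))
      = (b 0 • MulOpposite.op ((List.ofFn fun i : Fin p => b ⟨q + 1 + (i : ℕ), by omega⟩).prod) • (f fun i : Fin q => b ⟨(i : ℕ) + 1, by omega⟩)) ⊗ₜ[k] (((List.ofFn fun i : Fin (q + 1) => c ⟨(i : ℕ), by omega⟩).prod) • (g fun i : Fin p => c ⟨q + 1 + (i : ℕ), by omega⟩)) := by
    have e1 : (fun i : Fin p => Fin.tail b ⟨q + (i : ℕ), by omega⟩)
        = fun i : Fin p => b ⟨q + 1 + (i : ℕ), by omega⟩ :=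
      funext fun i => fin_app b (by (try simp only [Fin.val_succ, Fin.succ_mk]) <;> omega)
    have e2 : (fun i : Fin q => Fin.tail b ⟨(i : ℕ), by omega⟩)
        = fun i : Fin q => b ⟨(i : ℕ) + 1, by omega⟩ :=
      funext fun i => fin_app b (by (try simp only [Fin.val_succ, Fin.succ_mk]) <;> omega)
    have e3 : (fun i : Fin q => Fin.tail c ⟨(i : ℕ), by omega⟩)
        = fun i : Fin q => c ⟨(i : ℕ) + 1, by omega⟩ :=
      funext fun i => fin_app c (by (try simp only [Fin.val_succ, Fin.succ_mk]) <;> omega)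
    have e4 : (fun i : Fin p => Fin.tail c ⟨q + (i : ℕ), by omega⟩)
        = fun i : Fin p => c ⟨q + 1 + (i : ℕ), by omega⟩ :=
      funext fun i => fin_app c (by (try simp only [Fin.val_succ, Fin.succ_mk]) <;> omega)
    have e5 : c 0 * (List.ofFn fun i : Fin q => c ⟨(i : ℕ) + 1, by omega⟩).prod = (List.ofFn fun i : Fin (q + 1) => c ⟨(i : ℕ), by omega⟩).prod := by
      rw [ofFn_prod_cons q (fun i : Fin (q + 1) => c ⟨(i : ℕ), by omega⟩)]
      exact congrArg₂ (· * ·) (fin_app c (by simp))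
        (congrArg List.prod (congrArg List.ofFn (funext fun i =>
          fin_app c (by (try simp only [Fin.val_succ]) <;> omega))))
    rw [e1, e2, e3, e4, ← mul_smul (c 0), e5]
  have h2 : ∀ j : Fin q,
      (-1 : ℤ) ^ ((Fin.castAdd p j : ℕ) + 1) •
        (MulOpposite.op ((List.ofFn fun i : Fin p => contractArg (q + p) b (Fin.castAdd p j) ⟨q + (i : ℕ), by omega⟩).prod)
            • (f fun i : Fin q => contractArg (q + p) b (Fin.castAdd p j) ⟨(i : ℕ), by omega⟩)) ⊗ₜ[k]
          (((List.ofFn fun i : Fin q => contractArg (q + p) c (Fin.castAdd p j) ⟨(i : ℕ), by omega⟩).prod)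
            • (g fun i : Fin p => contractArg (q + p) c (Fin.castAdd p j) ⟨q + (i : ℕ), by omega⟩))
      = (-1 : ℤ) ^ ((j : ℕ) + 1) • ((MulOpposite.op ((List.ofFn fun i : Fin p => b ⟨q + 1 + (i : ℕ), by omega⟩).prod) • f (contractArg q (fun i : Fin (q + 1) => b ⟨(i : ℕ), by omega⟩) j)) ⊗ₜ[k] (((List.ofFn fun i : Fin (q + 1) => c ⟨(i : ℕ), by omega⟩).prod) • (g fun i : Fin p => c ⟨q + 1 + (i : ℕ), by omega⟩))) := by
    intro j
    have e1 : (fun i : Fin p => contractArg (q + p) b (Fin.castAdd p j) ⟨q + (i : ℕ), by omega⟩)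
        = fun i : Fin p => b ⟨q + 1 + (i : ℕ), by omega⟩ := funext fun i => by
      rw [contractArg_left_hi b (Fin.castAdd p j) (by simpa using j.isLt) i (by omega) (by omega)]
      exact fin_app b (by (try simp only [Fin.val_succ, Fin.succ_mk]) <;> omega)
    have e2 : (fun i : Fin q => contractArg (q + p) b (Fin.castAdd p j) ⟨(i : ℕ), by omega⟩)
        = contractArg q (fun i : Fin (q + 1) => b ⟨(i : ℕ), by omega⟩) j := funext fun i => by
      rw [contractArg_left_lo b (Fin.castAdd p j) (by simpa using j.isLt) i (by omega)]
      exact congrFun (congrArg₂ (contractArg q) rfl (Fin.ext (by simp))) i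
    have e3 : (fun i : Fin q => contractArg (q + p) c (Fin.castAdd p j) ⟨(i : ℕ), by omega⟩)
        = contractArg q (fun i : Fin (q + 1) => c ⟨(i : ℕ), by omega⟩) j := funext fun i => by
      rw [contractArg_left_lo c (Fin.castAdd p j) (by simpa using j.isLt) i (by omega)]
      exact congrFun (congrArg₂ (contractArg q) rfl (Fin.ext (by simp))) i
    have e4 : (fun i : Fin p => contractArg (q + p) c (Fin.castAdd p j) ⟨q + (i : ℕ), by omega⟩)
        = fun i : Fin p => c ⟨q + 1 + (i : ℕ), by omega⟩ := funext fun i => by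
      rw [contractArg_left_hi c (Fin.castAdd p j) (by simpa using j.isLt) i (by omega) (by omega)]
      exact fin_app c (by (try simp only [Fin.val_succ, Fin.succ_mk]) <;> omega)
    rw [e1, e2, e3, e4,
      prod_contractArg q (fun i : Fin (q + 1) => c ⟨(i : ℕ), by omega⟩) j]
    exact congrArg₂ (· • ·) (by rw [Fin.coe_castAdd]) rfl
  have h3 : ∀ j : Fin p,
      (-1 : ℤ) ^ ((Fin.natAdd q j : ℕ) + 1) •
        (MulOpposite.op ((List.ofFn fun i : Fin p => contractArg (q + p) b (Fin.natAdd q j) ⟨q + (i : ℕ), by omega⟩).prod)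
            • (f fun i : Fin q => contractArg (q + p) b (Fin.natAdd q j) ⟨(i : ℕ), by omega⟩)) ⊗ₜ[k]
          (((List.ofFn fun i : Fin q => contractArg (q + p) c (Fin.natAdd q j) ⟨(i : ℕ), by omega⟩).prod)
            • (g fun i : Fin p => contractArg (q + p) c (Fin.natAdd q j) ⟨q + (i : ℕ), by omega⟩))
      = (-1 : ℤ) ^ (q + (j : ℕ) + 1) • ((MulOpposite.op ((List.ofFn fun i : Fin (p + 1) => b ⟨q + (i : ℕ), by omega⟩).prod) • (f fun i : Fin q => b ⟨(i : ℕ), by omega⟩)) ⊗ₜ[k] (((List.ofFn fun i : Fin q => c ⟨(i : ℕ), by omega⟩).prod) • g (contractArg p (fun i : Fin (p + 1) => c ⟨q + (i : ℕ), by omega⟩) j))) := by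
    intro j
    have hj : q ≤ (Fin.natAdd q j : ℕ) := by
      rw [Fin.coe_natAdd]; omega
    have e1 : (fun i : Fin p => contractArg (q + p) b (Fin.natAdd q j) ⟨q + (i : ℕ), by omega⟩)
        = contractArg p (fun i : Fin (p + 1) => b ⟨q + (i : ℕ), by omega⟩) j := funext fun i => by
      rw [contractArg_right_hi b (Fin.natAdd q j) hj i (by omega)]
      refine congrFun (congrArg₂ (contractArg p) rfl (Fin.ext ?_)) i
      show (Fin.natAdd q j : ℕ) - q = (j : ℕ)
      rw [Fin.coe_natAdd]; omega
    have e2 : (fun i : Fin q => contractArg (q + p) b (Fin.natAdd q j) ⟨(i : ℕ), by omega⟩)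
        = fun i : Fin q => b ⟨(i : ℕ), by omega⟩ := funext fun i => by
      rw [contractArg_right_lo b (Fin.natAdd q j) hj i (by omega) (by omega)]
    have e3 : (fun i : Fin q => contractArg (q + p) c (Fin.natAdd q j) ⟨(i : ℕ), by omega⟩)
        = fun i : Fin q => c ⟨(i : ℕ), by omega⟩ := funext fun i => by
      rw [contractArg_right_lo c (Fin.natAdd q j) hj i (by omega) (by omega)]
    have e4 : (fun i : Fin p => contractArg (q + p) c (Fin.natAdd q j) ⟨q + (i : ℕ), by omega⟩)
        = contractArg p (fun i : Fin (p + 1) => c ⟨q + (i : ℕ), by omega⟩) j := funext fun i => by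
      rw [contractArg_right_hi c (Fin.natAdd q j) hj i (by omega)]
      refine congrFun (congrArg₂ (contractArg p) rfl (Fin.ext ?_)) i
      show (Fin.natAdd q j : ℕ) - q = (j : ℕ)
      rw [Fin.coe_natAdd]; omega
    rw [e1, e2, e3, e4,
      prod_contractArg p (fun i : Fin (p + 1) => b ⟨q + (i : ℕ), by omega⟩) j]
    exact congrArg₂ (· • ·) (by rw [Fin.coe_natAdd]) rfl
  have h4 : (MulOpposite.op (b (Fin.last (q + p))) •
        MulOpposite.op ((List.ofFn fun i : Fin p => Fin.init b ⟨q + (i : ℕ), by omega⟩).prod)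
        • (f fun i : Fin q => Fin.init b ⟨(i : ℕ), by omega⟩)) ⊗ₜ[k]
      (MulOpposite.op (c (Fin.last (q + p))) •
        ((List.ofFn fun i : Fin q => Fin.init c ⟨(i : ℕ), by omega⟩).prod)
        • (g fun i : Fin p => Fin.init c ⟨q + (i : ℕ), by omega⟩))
      = (MulOpposite.op ((List.ofFn fun i : Fin (p + 1) => b ⟨q + (i : ℕ), by omega⟩).prod) • (f fun i : Fin q => b ⟨(i : ℕ), by omega⟩)) ⊗ₜ[k]
        (((List.ofFn fun i : Fin q => c ⟨(i : ℕ), by omega⟩).prod) • MulOpposite.op (c ⟨q + p, by omega⟩) • (g fun i : Fin p => c ⟨q + (i : ℕ), by omega⟩)) := by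
    have e1 : (fun i : Fin p => Fin.init b ⟨q + (i : ℕ), by omega⟩)
        = fun i : Fin p => b ⟨q + (i : ℕ), by omega⟩ :=
      funext fun i => fin_app b (by simp only [Fin.coe_castSucc, Fin.castSucc_mk])
    have e2 : (fun i : Fin q => Fin.init b ⟨(i : ℕ), by omega⟩)
        = fun i : Fin q => b ⟨(i : ℕ), by omega⟩ :=
      funext fun i => fin_app b (by simp only [Fin.coe_castSucc, Fin.castSucc_mk])
    have e3 : (fun i : Fin q => Fin.init c ⟨(i : ℕ), by omega⟩)
        = fun i : Fin q => c ⟨(i : ℕ), by omega⟩ :=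
      funext fun i => fin_app c (by simp only [Fin.coe_castSucc, Fin.castSucc_mk])
    have e4 : (fun i : Fin p => Fin.init c ⟨q + (i : ℕ), by omega⟩)
        = fun i : Fin p => c ⟨q + (i : ℕ), by omega⟩ :=
      funext fun i => fin_app c (by simp only [Fin.coe_castSucc, Fin.castSucc_mk])
    have e5 : (List.ofFn fun i : Fin p => b ⟨q + (i : ℕ), by omega⟩).prod * b (Fin.last (q + p))
        = (List.ofFn fun i : Fin (p + 1) => b ⟨q + (i : ℕ), by omega⟩).prod := by
      rw [ofFn_prod_concat p (fun i : Fin (p + 1) => b ⟨q + (i : ℕ), by omega⟩)]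
      exact congrArg₂ (· * ·)
        (congrArg List.prod (congrArg List.ofFn (funext fun i =>
          fin_app b (by simp only [Fin.coe_castSucc]))))
        (fin_app b (by simp only [Fin.val_last]))
    have e6 : MulOpposite.op (c (Fin.last (q + p))) = MulOpposite.op (c ⟨q + p, by omega⟩) :=
      congrArg _ (fin_app c (by simp only [Fin.val_last]))
    rw [e1, e2, e3, e4, ← mul_smul, ← MulOpposite.op_mul, e5,
      smul_comm (MulOpposite.op (c (Fin.last (q + p)))) ((List.ofFn fun i : Fin q => c ⟨(i : ℕ), by omega⟩).prod), e6]
  have hb0 : b ⟨((0 : Fin (q + 1)) : ℕ), by omega⟩ = b 0 := fin_app b (by simp)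
  have htailf : (Fin.tail fun i : Fin (q + 1) => b ⟨(i : ℕ), by omega⟩)
      = fun i : Fin q => b ⟨(i : ℕ) + 1, by omega⟩ :=
    funext fun i => fin_app b (by simp only [Fin.val_succ])
  have hinitf : (Fin.init fun i : Fin (q + 1) => b ⟨(i : ℕ), by omega⟩)
      = fun i : Fin q => b ⟨(i : ℕ), by omega⟩ :=
    funext fun i => fin_app b (by simp only [Fin.coe_castSucc])
  have hlastb : b ⟨((Fin.last q : Fin (q + 1)) : ℕ), by omega⟩ = b ⟨q, by omega⟩ :=
    fin_app b (by simp only [Fin.val_last])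
  have hc0 : c ⟨q + ((0 : Fin (p + 1)) : ℕ), by omega⟩ = c ⟨q, by omega⟩ :=
    fin_app c (by simp)
  have htailg : (Fin.tail fun i : Fin (p + 1) => c ⟨q + (i : ℕ), by omega⟩)
      = fun i : Fin p => c ⟨q + 1 + (i : ℕ), by omega⟩ :=
    funext fun i => fin_app c (by (try simp only [Fin.val_succ]) <;> omega)
  have hinitg : (Fin.init fun i : Fin (p + 1) => c ⟨q + (i : ℕ), by omega⟩)
      = fun i : Fin p => c ⟨q + (i : ℕ), by omega⟩ :=
    funext fun i => fin_app c (by simp only [Fin.coe_castSucc])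
  have hlastc : c ⟨q + ((Fin.last p : Fin (p + 1)) : ℕ), by omega⟩ = c ⟨q + p, by omega⟩ :=
    fin_app c (by simp only [Fin.val_last])
  have hA1 : MulOpposite.op ((List.ofFn fun i : Fin p => b ⟨q + 1 + (i : ℕ), by omega⟩).prod) • (b 0) • (f fun i : Fin q => b ⟨(i : ℕ) + 1, by omega⟩) = (b 0) • MulOpposite.op ((List.ofFn fun i : Fin p => b ⟨q + 1 + (i : ℕ), by omega⟩).prod) • (f fun i : Fin q => b ⟨(i : ℕ) + 1, by omega⟩) :=
    smul_comm _ _ _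
  have hA3 : MulOpposite.op ((List.ofFn fun i : Fin p => b ⟨q + 1 + (i : ℕ), by omega⟩).prod) • MulOpposite.op (b ⟨q, by omega⟩) • (f fun i : Fin q => b ⟨(i : ℕ), by omega⟩) = MulOpposite.op ((List.ofFn fun i : Fin (p + 1) => b ⟨q + (i : ℕ), by omega⟩).prod) • (f fun i : Fin q => b ⟨(i : ℕ), by omega⟩) := by
    rw [← mul_smul, ← MulOpposite.op_mul]
    have e : b ⟨q, by omega⟩ * (List.ofFn fun i : Fin p => b ⟨q + 1 + (i : ℕ), by omega⟩).prod = (List.ofFn fun i : Fin (p + 1) => b ⟨q + (i : ℕ), by omega⟩).prod := by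
      rw [ofFn_prod_cons p (fun i : Fin (p + 1) => b ⟨q + (i : ℕ), by omega⟩)]
      exact congrArg₂ (· * ·) (fin_app b (by simp))
        (congrArg List.prod (congrArg List.ofFn (funext fun i =>
          fin_app b (by (try simp only [Fin.val_succ]) <;> omega))))
    rw [e]
  have hB1 : ((List.ofFn fun i : Fin q => c ⟨(i : ℕ), by omega⟩).prod) • c ⟨q, by omega⟩ • (g fun i : Fin p => c ⟨q + 1 + (i : ℕ), by omega⟩) = ((List.ofFn fun i : Fin (q + 1) => c ⟨(i : ℕ), by omega⟩).prod) • (g fun i : Fin p => c ⟨q + 1 + (i : ℕ), by omega⟩) := by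
    rw [← mul_smul]
    have e : ((List.ofFn fun i : Fin q => c ⟨(i : ℕ), by omega⟩).prod) * c ⟨q, by omega⟩ = (List.ofFn fun i : Fin (q + 1) => c ⟨(i : ℕ), by omega⟩).prod := by
      rw [ofFn_prod_concat q (fun i : Fin (q + 1) => c ⟨(i : ℕ), by omega⟩)]
      exact congrArg₂ (· * ·)
        (congrArg List.prod (congrArg List.ofFn (funext fun i =>
          fin_app c (by simp only [Fin.coe_castSucc]))))
        (fin_app c (by simp only [Fin.val_last]))
    rw [e]
  have hV : (-1 : ℤ) ^ (q + 1) • ((MulOpposite.op ((List.ofFn fun i : Fin (p + 1) => b ⟨q + (i : ℕ), by omega⟩).prod) • (f fun i : Fin q => b ⟨(i : ℕ), by omega⟩)) ⊗ₜ[k] (((List.ofFn fun i : Fin (q + 1) => c ⟨(i : ℕ), by omega⟩).prod) • (g fun i : Fin p => c ⟨q + 1 + (i : ℕ), by omega⟩))) = -((-1 : ℤ) ^ q • ((MulOpposite.op ((List.ofFn fun i : Fin (p + 1) => b ⟨q + (i : ℕ), by omega⟩).prod) • (f fun i : Fin q => b ⟨(i : ℕ), by omega⟩)) ⊗ₜ[k]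 (((List.ofFn fun i : Fin (q + 1) => c ⟨(i : ℕ), by omega⟩).prod) • (g fun i : Fin p => c ⟨q + 1 + (i : ℕ), by omega⟩)))) := by
    rw [pow_succ, mul_neg_one, neg_smul]
  trans (b 0 • MulOpposite.op ((List.ofFn fun i : Fin p => b ⟨q + 1 + (i : ℕ), by omega⟩).prod) • (f fun i : Fin q => b ⟨(i : ℕ) + 1, by omega⟩)) ⊗ₜ[k] (((List.ofFn fun i : Fin (q + 1) => c ⟨(i : ℕ), by omega⟩).prod) • (g fun i : Fin p => c ⟨q + 1 + (i : ℕ), by omega⟩))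
      + ((∑ j : Fin q, (-1 : ℤ) ^ ((j : ℕ) + 1) • ((MulOpposite.op ((List.ofFn fun i : Fin p => b ⟨q + 1 + (i : ℕ), by omega⟩).prod) • f (contractArg q (fun i : Fin (q + 1) => b ⟨(i : ℕ), by omega⟩) j)) ⊗ₜ[k] (((List.ofFn fun i : Fin (q + 1) => c ⟨(i : ℕ), by omega⟩).prod) • (g fun i : Fin p => c ⟨q + 1 + (i : ℕ), by omega⟩))))
      + ∑ j : Fin p, (-1 : ℤ) ^ (q + (j : ℕ) + 1) • ((MulOpposite.op ((List.ofFn fun i : Fin (p + 1) => b ⟨q + (i : ℕ), by omega⟩).prod) • (f fun i : Fin q => b ⟨(i : ℕ), by omega⟩)) ⊗ₜ[k] (((List.ofFn fun i : Fin q => c ⟨(i : ℕ), by omega⟩).prod) • g (contractArg p (fun i : Fin (p + 1) => c ⟨q + (i : ℕ), by omega⟩) j))))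
      + (-1 : ℤ) ^ (q + p + 1) • ((MulOpposite.op ((List.ofFn fun i : Fin (p + 1) => b ⟨q + (i : ℕ), by omega⟩).prod) • (f fun i : Fin q => b ⟨(i : ℕ), by omega⟩)) ⊗ₜ[k] (((List.ofFn fun i : Fin q => c ⟨(i : ℕ), by omega⟩).prod) • MulOpposite.op (c ⟨q + p, by omega⟩) • (g fun i : Fin p => c ⟨q + (i : ℕ), by omega⟩)))
  · simp only [hochDT, cupFun, hochD, TensorProduct.map_tmul, lmulG_apply]
    rw [Fin.sum_univ_add]
    rw [h1, h4]
    simp only [h2, h3]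
  · refine Eq.symm ?_
    simp only [cupFun, hochD]
    rw [hb0, htailf, hinitf, hlastb, hc0, htailg, hinitg, hlastc]
    simp only [smul_add, TensorProduct.add_tmul, TensorProduct.tmul_add]
    simp only [Finset.smul_sum, TensorProduct.sum_tmul, TensorProduct.tmul_sum]
    simp only [op_zsmulM, c_zsmulN]
    simp only [zsmul_tmul, tmul_zsmul]
    simp only [zpow_comb3]
    rw [hA1, hA3, hB1, hV]
    abel
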